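/- arXiv:math/0403380 — 5 statements merged into one kernel-verified Lean document; each statement's English description precedes it below -/
import Mathlib

section
/- If γ₀, ..., γ_{2n+1} are the spline coefficients, the local control polygon on I_i is convex (i.e. (d_{i-1}-a_{i-1})/(η_{i-1}-x_{i-1}) ≤ (c_i-d_{i-1})/(ξ_i-η_{i-1}) ≤ (a_i-c_i)/(x_i-ξ_i)) if and only if the slopes of the global control polygon satisfy (γ_{2i-1}-γ_{2i-2})/(η_{i-1}-ξ_{i-1}) ≤ (γ_{2i}-γ_{2i-1})/(ξ_i-η_{i-1}) ≤ (γ_{2i+1}-γ_{2i})/(η_i-ξ_i). -/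
theorem stmt5 (xim1 xi θim1 θi θip1 him1 hip1 g0 g1 g2 g3 : ℝ)
    (hhi : xim1 < xi)
    (hθim1 : 0 < θim1) (hθim1' : θim1 ≤ 1/4)
    (hθi : 0 < θi) (hθi' : θi ≤ 1/4)
    (hθip1 : 0 < θip1) (hθip1' : θip1 ≤ 1/4)
    (hhim1 : 0 < him1) (hhip1 : 0 < hip1) :
    let hi := xi - xim1
    let ξim1 := xim1 - θim1 * him1
    let ηim1 := xim1 + θi * hi
    let ξi := xi - θi * hi
    let ηi := xi + θip1 * hip1
    let ωim1 := θi * hi / (θim1 * him1 + θi * hi)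
    let ωi := θip1 * hip1 / (θi * hi + θip1 * hip1)
    let a0 := ωim1 * g0 + (1 - ωim1) * g1
    let d := g1
    let c := g2
    let a1 := ωi * g2 + (1 - ωi) * g3
    (((d - a0) / (ηim1 - xim1) ≤ (c - d) / (ξi - ηim1) ∧
      (c - d) / (ξi - ηim1) ≤ (a1 - c) / (xi - ξi)) ↔
     ((g1 - g0) / (ηim1 - ξim1) ≤ (g2 - g1) / (ξi - ηim1) ∧
      (g2 - g1) / (ξi - ηim1) ≤ (g3 - g2) / (ηi - ξi))) := by
  intro hi ξim1 ηim1 ξi ηi ωim1 ωi a0 d c a1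
  have hhi0 : (0:ℝ) < hi := sub_pos.mpr hhi
  have h1 : (0:ℝ) < θim1 * him1 := by positivity
  have h2 : (0:ℝ) < θi * hi := by positivity
  have h3 : (0:ℝ) < θip1 * hip1 := by positivity
  have e1 : (d - a0) / (ηim1 - xim1) = (g1 - g0) / (ηim1 - ξim1) := by
    show (g1 - (θi * hi / (θim1 * him1 + θi * hi) * g0 +
        (1 - θi * hi / (θim1 * him1 + θi * hi)) * g1)) / (xim1 + θi * hi - xim1)
      = (g1 - g0) / (xim1 + θi * hi - (xim1 - θim1 * him1))
    have hne1 : θim1 * him1 + θi * hi ≠ 0 := by positivity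
    have hne2 : θi * hi ≠ 0 := ne_of_gt h2
    have hd : xim1 + θi * hi - (xim1 - θim1 * him1) = θim1 * him1 + θi * hi := by ring
    rw [hd]
    field_simp
    ring
  have e2 : (a1 - c) / (xi - ξi) = (g3 - g2) / (ηi - ξi) := by
    show (θip1 * hip1 / (θi * hi + θip1 * hip1) * g2 +
        (1 - θip1 * hip1 / (θi * hi + θip1 * hip1)) * g3 - g2) / (xi - (xi - θi * hi))
      = (g3 - g2) / (xi + θip1 * hip1 - (xi - θi * hi))
    have hne1 : θi * hi + θip1 * hip1 ≠ 0 := by positivity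
    have hne2 : θi * hi ≠ 0 := ne_of_gt h2
    have hd : xi + θip1 * hip1 - (xi - θi * hi) = θi * hi + θip1 * hip1 := by ring
    rw [hd]
    field_simp
    ring
  rw [e1, e2]
end

section
/- Let Hermite data (y_{i-1}, p_{i-1}; y_i, p_i) on I_i = [x_{i-1},x_i] satisfy τ_i := (y_i - y_{i-1})/h_i > 0 and p_{i-1}, p_i > 0, and set μ_i = (p_{i-1}+p_i)/2. If 0 < θ_i < τ_i/(2μ_i) and θ_i ≤ 1/4, then the spline coefficients γ_{2i-1} = y_{i-1} + θ_ih_ip_{i-1}, γ_{2i} = y_i - θ_ih_ip_i satisfy γ_{2i} - γ_{2i-1} = h_i(τ_i - 2θ_iμ_i) > 0; in particular if μ_i ≤ 2τ_i the choice θ_i = 1/4 works. -/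
theorem stmt6 (h yim1 yi pim1 pi θ : ℝ) (hh : 0 < h)
    (hpim1 : 0 < pim1) (hpi : 0 < pi) :
    let τ := (yi - yim1) / h
    let μ := (pim1 + pi) / 2
    0 < τ →
    0 < θ → θ < τ / (2 * μ) → θ ≤ 1/4 →
    ((yi - θ * h * pi) - (yim1 + θ * h * pim1) = h * (τ - 2 * θ * μ) ∧
     0 < h * (τ - 2 * θ * μ)) ∧
    (μ ≤ 2 * τ → 0 ≤ h * (τ - 2 * (1/4 : ℝ) * μ)) := by
  intro τ μ hτ hθ hθlt hθ4
  have hμ : 0 < μ := by positivity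
  have h2μ : (0:ℝ) < 2 * μ := by positivity
  have key : 2 * θ * μ < τ := by
    have := (lt_div_iff₀ h2μ).mp hθlt
    nlinarith
  refine ⟨⟨?_, ?_⟩, ?_⟩
  · simp only [τ, μ]; field_simp; ring
  · exact mul_pos hh (by linarith)
  · intro hμτ; nlinarith
end

section
/- Let β ∈ [-1,0) and ω ∈ (0,1), and define the corner-cutting map on sequences: δ_{4i-2} = (1/2 - β/4)γ_{2i-1} + (1/2 + β/4)γ_{2i}, δ_{4i-1} = (1/2 + β/4)γ_{2i-1} + (1/2 - β/4)γ_{2i}, δ_{4i} = ((1+ω)/2)γ_{2i} + ((1-ω)/2)γ_{2i+1}, δ_{4i+1} = (ω/2)γ_{2i} + ((2-ω)/2)γ_{2i+1}. Then all four new values are convex combinations of consecutive old values, and if (γ_k) is nondecreasing then (δ_l) is nondecreasing. -/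
theorem stmt11 (β ω g1 g2 g3 : ℝ) (hβ1 : -1 ≤ β) (hβ0 : β < 0)
    (hω0 : 0 < ω) (hω1 : ω < 1) :
    let δ1 := (1/2 - β/4) * g1 + (1/2 + β/4) * g2
    let δ2 := (1/2 + β/4) * g1 + (1/2 - β/4) * g2
    let δ3 := ((1 + ω)/2) * g2 + ((1 - ω)/2) * g3
    let δ4 := (ω/2) * g2 + ((2 - ω)/2) * g3
    (min g1 g2 ≤ δ1 ∧ δ1 ≤ max g1 g2) ∧
    (min g1 g2 ≤ δ2 ∧ δ2 ≤ max g1 g2) ∧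
    (min g2 g3 ≤ δ3 ∧ δ3 ≤ max g2 g3) ∧
    (min g2 g3 ≤ δ4 ∧ δ4 ≤ max g2 g3) ∧
    (g1 ≤ g2 → g2 ≤ g3 → δ1 ≤ δ2 ∧ δ2 ≤ δ3 ∧ δ3 ≤ δ4) := by
  intro δ1 δ2 δ3 δ4
  simp only [δ1, δ2, δ3, δ4]
  refine ⟨⟨?_, ?_⟩, ⟨?_, ?_⟩, ⟨?_, ?_⟩, ⟨?_, ?_⟩, fun h12 h23 => ⟨?_, ?_, ?_⟩⟩ <;>
    rcases le_total g1 g2 with h | h <;> rcases le_total g2 g3 with h' | h' <;>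
    (try simp [min_def, max_def, h, h']) <;> nlinarith
end

section
/- With the corner-cutting formulas δ_{4i-2} = (1/2-β_i/4)γ_{2i-1}+(1/2+β_i/4)γ_{2i}, δ_{4i-1}=(1/2+β_i/4)γ_{2i-1}+(1/2-β_i/4)γ_{2i}, δ_{4i}=((1+ω_i)/2)γ_{2i}+((1-ω_i)/2)γ_{2i+1}, δ_{4i+1}=(ω_i/2)γ_{2i}+((2-ω_i)/2)γ_{2i+1}, one has |δ_{4i-1}-δ_{4i-2}| = (|β_i|/2)|γ_{2i}-γ_{2i-1}| ≤ (1/2)|γ_{2i}-γ_{2i-1}|, |δ_{4i+1}-δ_{4i}| = (1/2)|γ_{2i+1}-γ_{2i}|, and |δ_{4i}-δ_{4i-1}| ≤ (1/2)max(|γ_{2i+1}-γ_{2i}|, |γ_{2i}-γ_{2i-1}|). Consequently Δ₁ ≤ Δ₀/2 where Δ denotes the maximal absolute difference of consecutive coefficients. -/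
theorem stmt12 (β ω g1 g2 g3 : ℝ) (hβ1 : -1 ≤ β) (hβ0 : β < 0)
    (hω0 : 0 < ω) (hω1 : ω < 1) :
    let δ1 := (1/2 - β/4) * g1 + (1/2 + β/4) * g2
    let δ2 := (1/2 + β/4) * g1 + (1/2 - β/4) * g2
    let δ3 := ((1 + ω)/2) * g2 + ((1 - ω)/2) * g3
    let δ4 := (ω/2) * g2 + ((2 - ω)/2) * g3
    (|δ2 - δ1| = (|β|/2) * |g2 - g1| ∧ |δ2 - δ1| ≤ (1/2) * |g2 - g1|) ∧
    |δ4 - δ3| = (1/2) * |g3 - g2| ∧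
    |δ3 - δ2| ≤ ((1 - ω)/2) * |g3 - g2| + (1/2 + β/4) * |g2 - g1| ∧
    max |δ2 - δ1| |δ4 - δ3| ≤ (1/2) * max |g2 - g1| |g3 - g2| := by
  intro δ1 δ2 δ3 δ4
  have hβabs : |β| ≤ 1 := abs_le.mpr ⟨hβ1, hβ0.le.trans one_pos.le⟩
  have h1 : δ2 - δ1 = (β/2) * (g1 - g2) := by simp only [δ1, δ2]; ring
  have e1 : |δ2 - δ1| = (|β|/2) * |g2 - g1| := by
    rw [h1, abs_mul, abs_div, abs_two, ← abs_neg (g1 - g2)]; ring_nf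
  have i1 : |δ2 - δ1| ≤ (1/2) * |g2 - g1| := by
    rw [e1]
    have := abs_nonneg (g2 - g1)
    nlinarith
  have h2 : δ4 - δ3 = (1/2) * (g3 - g2) := by simp only [δ3, δ4]; ring
  have e2 : |δ4 - δ3| = (1/2) * |g3 - g2| := by
    rw [h2, abs_mul]; norm_num
  refine ⟨⟨e1, i1⟩, e2, ?_, ?_⟩
  · have h3 : δ3 - δ2 = ((1 - ω)/2) * (g3 - g2) + (1/2 + β/4) * (g2 - g1) := by
      simp only [δ2, δ3]; ring
    calc |δ3 - δ2| ≤ |((1 - ω)/2) * (g3 - g2)| + |(1/2 + β/4) * (g2 - g1)| := by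
          rw [h3]; exact abs_add_le _ _
      _ = ((1 - ω)/2) * |g3 - g2| + (1/2 + β/4) * |g2 - g1| := by
          rw [abs_mul, abs_mul, abs_of_nonneg (by linarith : (0:ℝ) ≤ (1 - ω)/2),
            abs_of_nonneg (by linarith : (0:ℝ) ≤ 1/2 + β/4)]
  · apply max_le
    · exact i1.trans (by gcongr <;> simp [le_max_left])
    · rw [e2]; gcongr; exact le_max_right _ _
end

section
/- Let β_i ∈ [-1,0) with β̄ = max_i β_i, and λ_i = 2(β_i-1)/β_i ∈ [4, λ̄] where λ̄ = 2(β̄-1)/β̄. Then for all i, 2λ_i/(λ_{i-1}+λ_i) - β_i ≥ 8/(λ̄+4) - β̄ = β̄(5-3β̄)/(3β̄-1) > 0. -/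
theorem stmt16 (b bprev bbar : ℝ)
    (hb1 : -1 ≤ b) (hb0 : b < 0) (hp1 : -1 ≤ bprev) (hp0 : bprev < 0)
    (hbb1 : -1 ≤ bbar) (hbb0 : bbar < 0)
    (hle : b ≤ bbar) (hple : bprev ≤ bbar) :
    let lam := 2 * (b - 1) / b
    let lamprev := 2 * (bprev - 1) / bprev
    let lambar := 2 * (bbar - 1) / bbar
    2 * lam / (lamprev + lam) - b ≥ 8 / (lambar + 4) - bbar ∧
    8 / (lambar + 4) - bbar = bbar * (5 - 3 * bbar) / (3 * bbar - 1) ∧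
    0 < bbar * (5 - 3 * bbar) / (3 * bbar - 1) := by
  intro lam lamprev lambar
  have hbne : b ≠ 0 := ne_of_lt hb0
  have hpne : bprev ≠ 0 := ne_of_lt hp0
  have hbbne : bbar ≠ 0 := ne_of_lt hbb0
  have hlam4 : (4:ℝ) ≤ lam := by
    rw [le_div_iff_of_neg hb0]; nlinarith
  have hlamp4 : (4:ℝ) ≤ lamprev := by
    rw [le_div_iff_of_neg hp0]; nlinarith
  have hlamb4 : (4:ℝ) ≤ lambar := by
    rw [le_div_iff_of_neg hbb0]; nlinarith
  have hmul1 : (0:ℝ) < b * bbar := mul_pos_of_neg_of_neg hb0 hbb0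
  have hmul2 : (0:ℝ) < bprev * bbar := mul_pos_of_neg_of_neg hp0 hbb0
  have hlamle : lam ≤ lambar := by
    have he : lambar - lam = 2 * (bbar - b) / (b * bbar) := by
      show 2 * (bbar - 1) / bbar - 2 * (b - 1) / b = _
      field_simp; ring
    nlinarith [div_nonneg (by linarith : (0:ℝ) ≤ 2 * (bbar - b)) hmul1.le]
  have hlample : lamprev ≤ lambar := by
    have he : lambar - lamprev = 2 * (bbar - bprev) / (bprev * bbar) := by
      show 2 * (bbar - 1) / bbar - 2 * (bprev - 1) / bprev = _
      field_simp; ring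
    nlinarith [div_nonneg (by linarith : (0:ℝ) ≤ 2 * (bbar - bprev)) hmul2.le]
  refine ⟨?_, ?_, ?_⟩
  · have h1 : (0:ℝ) < lamprev + lam := by linarith
    have h2 : (0:ℝ) < lambar + 4 := by linarith
    have key : 8 / (lambar + 4) ≤ 2 * lam / (lamprev + lam) := by
      rw [div_le_div_iff₀ h2 h1]; nlinarith
    linarith
  · have hlb : lambar = 2 * (bbar - 1) / bbar := rfl
    have h2 : lambar + 4 ≠ 0 := by linarith
    rw [hlb] at h2 ⊢
    have h3 : (3:ℝ) * bbar - 1 ≠ 0 := by nlinarith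
    have h4 : (6:ℝ) * bbar - 2 ≠ 0 := by nlinarith
    have h5 : 2 * (bbar - 1) / bbar + 4 = (6 * bbar - 2) / bbar := by
      field_simp; ring
    rw [h5, div_div_eq_mul_div]
    rw [div_sub' h4, div_eq_div_iff h4 h3]
    ring
  · apply div_pos_of_neg_of_neg <;> nlinarith
end
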